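/- For every real x ∈ [0,1] and natural number n, (1 - x)^n ≤ 1 - n·x + n²·x². -/
import Mathlib

/-- For `x ∈ [0,1]` and `n : ℕ`, `(1 - x)^n ≤ 1 - n·x + n²·x²`. -/
theorem one_sub_pow_le (x : ℝ) (hx0 : 0 ≤ x) (hx1 : x ≤ 1) (n : ℕ) :
    (1 - x) ^ n ≤ 1 - n * x + (n : ℝ) ^ 2 * x ^ 2 := by
  induction n with
  | zero => simp
  | succ n ih =>
    have h1 : (0:ℝ) ≤ 1 - x := by linarith
    have h2 : (1 - x) ^ (n + 1) ≤ (1 - x) * (1 - n * x + (n : ℝ) ^ 2 * x ^ 2) := by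
      rw [pow_succ, mul_comm]
      exact mul_le_mul_of_nonneg_left ih h1
    push_cast
    nlinarith [sq_nonneg x, sq_nonneg ((n:ℝ) * x), mul_nonneg (mul_nonneg (mul_nonneg hx0 hx0) hx0) (sq_nonneg (n:ℝ))]
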